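/- If g : [0,1] → [0,1]² is any function whose restriction to I coincides with Cantor's bijection f, then g is discontinuous at every rational number of [0,1]. -/

import Mathlib

open Filter Finset MeasureTheory

/-- `qden a n` is the denominator `q_n` of the continued fraction with partial
quotients `a_1 = a 0, a_2 = a 1, …` (0-indexed sequence `a`), defined by
`q_0 = 1`, `q_1 = a_1`, `q_n = a_n q_{n-1} + q_{n-2}`. -/
def qden (a : ℕ → ℕ+) : ℕ → ℕ
  | 0 => 1
  | 1 => a 0
  | (n+2) => (a (n+1) : ℕ) * qden a (n+1) + qden a n

/-- `pnum a n` is the numerator `p_n`, defined by `p_0 = 0`, `p_1 = 1`,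
`p_n = a_n p_{n-1} + p_{n-2}`. -/
def pnum (a : ℕ → ℕ+) : ℕ → ℕ
  | 0 => 0
  | 1 => 1
  | (n+2) => (a (n+1) : ℕ) * pnum a (n+1) + pnum a n

/-- The value `[a_1, a_2, …]` of the infinite continued fraction with partial quotients
`a_1 = a 0, a_2 = a 1, …`, i.e. the limit of the convergents `p_n / q_n` (which always
exists). -/
noncomputable def cfVal (a : ℕ → ℕ+) : ℝ :=
  limUnder atTop (fun n => (pnum a n : ℝ) / (qden a n : ℝ))

namespace CFAux

noncomputable def s (a : ℕ → ℕ+) (n : ℕ) : ℝ := (pnum a n : ℝ) / (qden a n : ℝ)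

lemma qden_pos (a : ℕ → ℕ+) : ∀ n, 0 < qden a n := by
  intro n
  induction n using Nat.twoStepInduction with
  | zero => simp [qden]
  | one => simp [qden]
  | more n ih1 ih2 => simp only [qden]; positivity

lemma qden_mono (a : ℕ → ℕ+) : ∀ n, qden a n ≤ qden a (n+1) := by
  intro n
  match n with
  | 0 => show 1 ≤ (a 0 : ℕ); exact (a 0).pos
  | (n+1) =>
    show qden a (n+1) ≤ (a (n+1) : ℕ) * qden a (n+1) + qden a n
    calc qden a (n+1) = 1 * qden a (n+1) := (one_mul _).symm
    _ ≤ (a (n+1) : ℕ) * qden a (n+1) := Nat.mul_le_mul_right _ (a (n+1)).pos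
    _ ≤ _ := Nat.le_add_right _ _

lemma qden_two_mul (a : ℕ → ℕ+) (n : ℕ) : 2 * qden a n ≤ qden a (n+2) := by
  show 2 * qden a n ≤ (a (n+1) : ℕ) * qden a (n+1) + qden a n
  have h2 : qden a n ≤ (a (n+1) : ℕ) * qden a (n+1) :=
    (qden_mono a n).trans (by
      calc qden a (n+1) = 1 * qden a (n+1) := (one_mul _).symm
      _ ≤ (a (n+1) : ℕ) * qden a (n+1) := Nat.mul_le_mul_right _ (a (n+1)).pos)
  omega

lemma coeff_le_qden (a : ℕ → ℕ+) (n : ℕ) : (a n : ℕ) ≤ qden a (n+1) := by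
  match n with
  | 0 => show (a 0 : ℕ) ≤ (a 0 : ℕ); exact le_rfl
  | (n+1) =>
    show (a (n+1) : ℕ) ≤ (a (n+1) : ℕ) * qden a (n+1) + qden a n
    calc (a (n+1) : ℕ) = (a (n+1) : ℕ) * 1 := (mul_one _).symm
    _ ≤ (a (n+1) : ℕ) * qden a (n+1) := Nat.mul_le_mul_left _ (qden_pos a (n+1))
    _ ≤ _ := Nat.le_add_right _ _

lemma pnum_le_qden (a : ℕ → ℕ+) : ∀ n, pnum a n ≤ qden a n := by
  intro n
  induction n using Nat.twoStepInduction with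
  | zero => show 0 ≤ 1; omega
  | one => show 1 ≤ (a 0 : ℕ); exact (a 0).pos
  | more n ih1 ih2 =>
    show (a (n+1) : ℕ) * pnum a (n+1) + pnum a n ≤ (a (n+1) : ℕ) * qden a (n+1) + qden a n
    exact Nat.add_le_add (Nat.mul_le_mul_left _ ih2) ih1

lemma det (a : ℕ → ℕ+) : ∀ n,
    (pnum a (n+1) : ℤ) * qden a n - (pnum a n : ℤ) * qden a (n+1) = (-1)^n := by
  intro n
  induction n using Nat.twoStepInduction with
  | zero => show (1 : ℤ) * 1 - 0 * (a 0 : ℕ) = 1; ring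
  | one =>
    show ((a 1 : ℕ) * pnum a 1 + pnum a 0 : ℤ) * (a 0 : ℕ)
        - (pnum a 1 : ℤ) * ((a 1 : ℕ) * qden a 1 + qden a 0) = -1
    show ((a 1 : ℕ) * 1 + 0 : ℤ) * (a 0 : ℕ) - (1 : ℤ) * ((a 1 : ℕ) * (a 0 : ℕ) + 1) = -1
    push_cast; ring
  | more n ih1 ih2 =>
    show ((a (n+2) : ℕ) * pnum a (n+2) + pnum a (n+1) : ℤ) * qden a (n+2)
        - (pnum a (n+2) : ℤ) * ((a (n+2) : ℕ) * qden a (n+2) + qden a (n+1)) = (-1)^(n+2)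
    push_cast at ih2 ⊢
    linear_combination (-1 : ℤ) * ih2

lemma dist_s (a : ℕ → ℕ+) (n : ℕ) :
    dist (s a n) (s a (n+1)) = 1 / ((qden a n : ℝ) * qden a (n+1)) := by
  have hq : (0:ℝ) < qden a n := by exact_mod_cast qden_pos a n
  have hq' : (0:ℝ) < qden a (n+1) := by exact_mod_cast qden_pos a (n+1)
  have hdet : ((pnum a (n+1) : ℝ) * qden a n - (pnum a n : ℝ) * qden a (n+1)) = (-1)^n := by
    exact_mod_cast congrArg (fun z : ℤ => (z : ℝ)) (det a n)
  have key : s a (n+1) - s a n = (-1)^n / ((qden a n : ℝ) * qden a (n+1)) := by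
    rw [s, s, div_sub_div _ _ hq'.ne' hq.ne', ← hdet]
    ring_nf
  rw [dist_comm, Real.dist_eq, key, abs_div, abs_pow, abs_neg, abs_one, one_pow,
    abs_of_pos (by positivity)]

lemma prod_ge (a : ℕ → ℕ+) (m : ℕ) : ∀ j,
    2^j * (qden a m * qden a (m+1)) ≤ qden a (m+j) * qden a (m+j+1) := by
  intro j
  induction j with
  | zero => simp
  | succ j ih =>
    have h1 : 2 * qden a (m+j) ≤ qden a (m+j+2) := qden_two_mul a (m+j)
    have h2 : (2 * qden a (m+j)) * qden a (m+j+1) ≤ qden a (m+j+2) * qden a (m+j+1) :=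
      Nat.mul_le_mul_right _ h1
    calc 2^(j+1) * (qden a m * qden a (m+1)) = 2 * (2^j * (qden a m * qden a (m+1))) := by ring
    _ ≤ 2 * (qden a (m+j) * qden a (m+j+1)) := Nat.mul_le_mul_left _ ih
    _ = (2 * qden a (m+j)) * qden a (m+j+1) := by ring
    _ ≤ qden a (m+j+2) * qden a (m+j+1) := h2
    _ = qden a (m+j+1) * qden a (m+j+1+1) := by rw [mul_comm]

lemma dist_s_le (a : ℕ → ℕ+) (m j : ℕ) :
    dist (s a (m+j)) (s a (m+j+1)) ≤ (1 / ((qden a m : ℝ) * qden a (m+1))) * (1/2)^j := by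
  rw [dist_s]
  have h2 : (2:ℝ)^j * ((qden a m : ℝ) * qden a (m+1)) ≤ (qden a (m+j) : ℝ) * qden a (m+j+1) := by
    exact_mod_cast prod_ge a m j
  have hp : (0:ℝ) < (qden a m : ℝ) * qden a (m+1) := by
    have h := qden_pos a m; have h' := qden_pos a (m+1)
    have : (0:ℝ) < qden a m := by exact_mod_cast h
    have : (0:ℝ) < qden a (m+1) := by exact_mod_cast h'
    positivity
  have heq : (1 / ((qden a m : ℝ) * qden a (m+1))) * (1/2)^j
      = 1 / ((2:ℝ)^j * ((qden a m : ℝ) * qden a (m+1))) := by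
    rw [div_pow, one_pow, div_mul_div_comm, one_mul, mul_comm]
  rw [heq]
  exact one_div_le_one_div_of_le (by positivity) h2

lemma tendsto_s (a : ℕ → ℕ+) : Tendsto (s a) atTop (nhds (cfVal a)) := by
  have hb : ∀ n, dist (s a n) (s a (n+1)) ≤ 1 * (1/2)^n := by
    intro n
    rw [dist_s, one_mul, div_pow, one_pow]
    apply one_div_le_one_div_of_le (by positivity)
    have h := prod_ge a 0 n
    simp only [Nat.zero_add] at h
    have h1 : (1:ℕ) ≤ qden a 0 * qden a 1 :=
      Nat.one_le_iff_ne_zero.mpr (Nat.mul_ne_zero (qden_pos a 0).ne' (qden_pos a 1).ne')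
    have : 2^n ≤ qden a n * qden a (n+1) := by
      calc 2^n = 2^n * 1 := (mul_one _).symm
      _ ≤ 2^n * (qden a 0 * qden a 1) := Nat.mul_le_mul_left _ h1
      _ ≤ _ := h
    exact_mod_cast this
  have hc : CauchySeq (s a) := cauchySeq_of_le_geometric (1/2) 1 (by norm_num) hb
  obtain ⟨L, hL⟩ := cauchySeq_tendsto_of_complete hc
  have hcl : cfVal a = L := hL.limUnder_eq
  rw [show cfVal a = L from hcl]
  exact hL

lemma dist_cfVal (a : ℕ → ℕ+) (m : ℕ) :
    dist (s a m) (cfVal a) ≤ 2 / ((qden a m : ℝ) * qden a (m+1)) := by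
  have key := dist_le_tsum_of_dist_le_of_tendsto₀
    (f := fun j => s a (m+j))
    (d := fun j => (1 / ((qden a m : ℝ) * qden a (m+1))) * (1/2)^j)
    (fun j => dist_s_le a m j)
    ((summable_geometric_of_lt_one (by norm_num) (by norm_num)).mul_left _)
    (by
      have he : (fun j => s a (m + j)) = (fun j => s a (j + m)) := by
        funext j; rw [Nat.add_comm]
      rw [he]
      exact (tendsto_s a).comp (tendsto_add_atTop_nat m))
  simp only [Nat.add_zero] at key
  calc dist (s a m) (cfVal a)
      ≤ ∑' j : ℕ, (1 / ((qden a m : ℝ) * qden a (m+1))) * (1/2)^j := key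
  _ = (1 / ((qden a m : ℝ) * qden a (m+1))) * (1 - 1/2)⁻¹ := by
      rw [tsum_mul_left, tsum_geometric_of_lt_one (by norm_num) (by norm_num)]
  _ = 2 / ((qden a m : ℝ) * qden a (m+1)) := by ring

lemma s_nonneg (a : ℕ → ℕ+) (n : ℕ) : 0 ≤ s a n := by
  rw [s]; positivity

lemma s_le_one (a : ℕ → ℕ+) (n : ℕ) : s a n ≤ 1 := by
  rw [s, div_le_one (by exact_mod_cast qden_pos a n)]
  exact_mod_cast pnum_le_qden a n

lemma cfVal_nonneg (a : ℕ → ℕ+) : 0 ≤ cfVal a :=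
  ge_of_tendsto' (tendsto_s a) (s_nonneg a)

lemma cfVal_le_one (a : ℕ → ℕ+) : cfVal a ≤ 1 :=
  le_of_tendsto' (tendsto_s a) (s_le_one a)

lemma shift (a : ℕ → ℕ+) : ∀ n, pnum a (n+1) = qden (fun i => a (i+1)) n ∧
    qden a (n+1) = (a 0 : ℕ) * qden (fun i => a (i+1)) n + pnum (fun i => a (i+1)) n := by
  set b : ℕ → ℕ+ := fun i => a (i+1) with hb
  intro n
  induction n using Nat.twoStepInduction with
  | zero =>
    constructor
    · show (1:ℕ) = 1; rfl
    · show (a 0 : ℕ) = (a 0 : ℕ) * 1 + 0; omega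
  | one =>
    constructor
    · show (a 1 : ℕ) * pnum a 1 + pnum a 0 = (b 0 : ℕ)
      show (a 1 : ℕ) * 1 + 0 = (a 1 : ℕ); omega
    · show (a 1 : ℕ) * qden a 1 + qden a 0 = (a 0 : ℕ) * qden b 1 + pnum b 1
      show (a 1 : ℕ) * (a 0 : ℕ) + 1 = (a 0 : ℕ) * (a 1 : ℕ) + 1; ring
  | more n ih1 ih2 =>
    constructor
    · show (a (n+2) : ℕ) * pnum a (n+2) + pnum a (n+1)
        = (b (n+1) : ℕ) * qden b (n+1) + qden b n
      rw [ih2.1, ih1.1]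
    · show (a (n+2) : ℕ) * qden a (n+2) + qden a (n+1)
        = (a 0 : ℕ) * ((b (n+1) : ℕ) * qden b (n+1) + qden b n)
          + ((b (n+1) : ℕ) * pnum b (n+1) + pnum b n)
      rw [ih2.2, ih1.2]
      show (b (n+1) : ℕ) * ((a 0 : ℕ) * qden b (n+1) + pnum b (n+1))
          + ((a 0 : ℕ) * qden b n + pnum b n) = _
      ring

lemma cfVal_shift (a : ℕ → ℕ+) :
    cfVal a = 1 / (((a 0 : ℕ) : ℝ) + cfVal (fun i => a (i+1))) := by
  set b : ℕ → ℕ+ := fun i => a (i+1) with hb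
  have ha0 : (1:ℝ) ≤ ((a 0 : ℕ) : ℝ) := by exact_mod_cast (a 0).pos
  have hden : (0:ℝ) < ((a 0 : ℕ) : ℝ) + cfVal b := by
    have := cfVal_nonneg b; linarith
  have hs : ∀ n, s a (n+1) = 1 / (((a 0 : ℕ) : ℝ) + s b n) := by
    intro n
    obtain ⟨h1, h2⟩ := shift a n
    have hq : (0:ℝ) < qden b n := by exact_mod_cast qden_pos b n
    have hp : (0:ℝ) ≤ (pnum b n : ℝ) := by positivity
    have h3 : (0:ℝ) < ((a 0 : ℕ) : ℝ) + (pnum b n : ℝ) / qden b n := by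
      have := div_nonneg hp hq.le; linarith
    have h4 : (0:ℝ) < ((a 0 : ℕ) : ℝ) * qden b n + pnum b n := by nlinarith
    rw [s, s, h1, h2]
    push_cast
    rw [div_eq_div_iff h4.ne' h3.ne']
    field_simp
    try ring
  have t1 : Tendsto (fun n => s a (n+1)) atTop (nhds (cfVal a)) :=
    (tendsto_s a).comp (tendsto_add_atTop_nat 1)
  have t2 : Tendsto (fun n => 1 / (((a 0 : ℕ) : ℝ) + s b n)) atTop
      (nhds (1 / (((a 0 : ℕ) : ℝ) + cfVal b))) :=
    Tendsto.div tendsto_const_nhds (Tendsto.const_add _ (tendsto_s b)) hden.ne'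
  rw [funext hs] at t1
  exact tendsto_nhds_unique t1 t2

lemma cfVal_pos (a : ℕ → ℕ+) : 0 < cfVal a := by
  rw [cfVal_shift a]
  have ha0 : (1:ℝ) ≤ ((a 0 : ℕ) : ℝ) := by exact_mod_cast (a 0).pos
  have := cfVal_nonneg (fun i => a (i+1))
  have : (0:ℝ) < ((a 0 : ℕ) : ℝ) + cfVal (fun i => a (i+1)) := by linarith
  positivity

lemma cfVal_lt_one (a : ℕ → ℕ+) : cfVal a < 1 := by
  rw [cfVal_shift a]
  have ha0 : (1:ℝ) ≤ ((a 0 : ℕ) : ℝ) := by exact_mod_cast (a 0).pos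
  have h2 := cfVal_pos (fun i => a (i+1))
  rw [div_lt_one (by linarith)]
  linarith

lemma head_and_tail (a b : ℕ → ℕ+) (h : cfVal a = cfVal b) :
    a 0 = b 0 ∧ cfVal (fun i => a (i+1)) = cfVal (fun i => b (i+1)) := by
  have hy0 : 0 < cfVal (fun i => a (i+1)) := cfVal_pos _
  have hy1 : cfVal (fun i => a (i+1)) < 1 := cfVal_lt_one _
  have hz0 : 0 < cfVal (fun i => b (i+1)) := cfVal_pos _
  have hz1 : cfVal (fun i => b (i+1)) < 1 := cfVal_lt_one _
  have h1 : (1:ℝ) ≤ ((a 0 : ℕ) : ℝ) := by exact_mod_cast (a 0).pos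
  have h2 : (1:ℝ) ≤ ((b 0 : ℕ) : ℝ) := by exact_mod_cast (b 0).pos
  rw [cfVal_shift a, cfVal_shift b] at h
  have ha' : (0:ℝ) < ((a 0 : ℕ) : ℝ) + cfVal (fun i => a (i+1)) := by linarith
  have hb' : (0:ℝ) < ((b 0 : ℕ) : ℝ) + cfVal (fun i => b (i+1)) := by linarith
  have heq : ((a 0 : ℕ) : ℝ) + cfVal (fun i => a (i+1))
      = ((b 0 : ℕ) : ℝ) + cfVal (fun i => b (i+1)) := by
    field_simp [ha'.ne', hb'.ne'] at h
    linarith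
  have hn : (a 0 : ℕ) = (b 0 : ℕ) := by
    have d1 : (a 0 : ℕ) < (b 0 : ℕ) + 1 := by
      have : ((a 0 : ℕ) : ℝ) < ((b 0 : ℕ) : ℝ) + 1 := by linarith
      exact_mod_cast this
    have d2 : (b 0 : ℕ) < (a 0 : ℕ) + 1 := by
      have : ((b 0 : ℕ) : ℝ) < ((a 0 : ℕ) : ℝ) + 1 := by linarith
      exact_mod_cast this
    omega
  refine ⟨PNat.coe_injective hn, ?_⟩
  have hcast : ((a 0 : ℕ) : ℝ) = ((b 0 : ℕ) : ℝ) := by exact_mod_cast hn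
  linarith

lemma cfVal_coeff_eq : ∀ (n : ℕ) (a b : ℕ → ℕ+), cfVal a = cfVal b → a n = b n := by
  intro n
  induction n with
  | zero => intro a b h; exact (head_and_tail a b h).1
  | succ n ih =>
    intro a b h
    exact ih (fun i => a (i+1)) (fun i => b (i+1)) (head_and_tail a b h).2

lemma cfVal_inj {a b : ℕ → ℕ+} (h : cfVal a = cfVal b) : a = b :=
  funext fun n => cfVal_coeff_eq n a b h


lemma den_descent (r : ℚ) (hr0 : 0 < r) (c : ℕ) (h0 : 0 ≤ r⁻¹ - (c:ℚ))
    (h1 : r⁻¹ - (c:ℚ) < 1) : (r⁻¹ - (c:ℚ)).num.natAbs < r.num.natAbs := by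
  set r' := r⁻¹ - (c:ℚ) with hr'
  have hnum : (0:ℤ) < r.num := Rat.num_pos.mpr hr0
  have hnq : ((r.num : ℤ) : ℚ) ≠ 0 := Int.cast_ne_zero.mpr (Rat.num_ne_zero.mpr hr0.ne')
  have key : r' = Rat.divInt ((r.den : ℤ) - c * r.num) r.num := by
    rw [Rat.divInt_eq_div, hr']
    have hden : (r.den : ℚ) ≠ 0 := by
      exact_mod_cast (Rat.den_pos r).ne'
    rw [eq_div_iff hnq]
    have hrr : (r.num : ℚ) / r.den = r := Rat.num_div_den r
    field_simp
    have hnd : (r.num:ℚ) = r * r.den := (div_eq_iff hden).mp hrr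
    push_cast; linear_combination hnd
  have hdvd : ((r' : ℚ).den : ℤ) ∣ r.num := by
    rw [key]; exact Rat.den_dvd _ _
  have hdvd' : r'.den ∣ r.num.natAbs := Int.natCast_dvd.mp hdvd
  have hle : r'.den ≤ r.num.natAbs :=
    Nat.le_of_dvd (by omega) hdvd'
  have hnn : 0 ≤ r'.num := Rat.num_nonneg.mpr h0
  have hlt : r'.num < r'.den := Rat.lt_one_iff_num_lt_denom.mpr h1
  have : r'.num.natAbs < r'.den := by omega
  omega

lemma cfVal_ne_rat : ∀ (n : ℕ) (r : ℚ), r.num.natAbs ≤ n → ∀ a : ℕ → ℕ+, cfVal a ≠ (r : ℝ) := by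
  intro n
  induction n with
  | zero =>
    intro r hr a hc
    have : r.num = 0 := by omega
    have hr0 : r = 0 := Rat.num_eq_zero.mp this
    rw [hr0] at hc
    exact absurd hc (by push_cast; exact (cfVal_pos a).ne')
  | succ n ih =>
    intro r hr a hc
    have hx0 := cfVal_pos a
    have hx1 := cfVal_lt_one a
    have hr0 : 0 < r := by
      have : (0:ℝ) < (r:ℝ) := hc ▸ hx0
      exact_mod_cast this
    set y := cfVal (fun i => a (i+1)) with hy
    have hy0 : 0 < y := cfVal_pos _
    have hy1 : y < 1 := cfVal_lt_one _
    have ha0 : (1:ℝ) ≤ ((a 0 : ℕ) : ℝ) := by exact_mod_cast (a 0).pos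
    have hsh := cfVal_shift a
    rw [hc, ← hy] at hsh
    have hry : (r:ℝ) * (((a 0 : ℕ) : ℝ) + y) = 1 := by
      rw [hsh]
      field_simp
    have hyval : y = (r:ℝ)⁻¹ - ((a 0 : ℕ) : ℝ) := by
      have hrne : (r:ℝ) ≠ 0 := by exact_mod_cast hr0.ne'
      field_simp
      linarith [hry]
    set r' : ℚ := r⁻¹ - ((a 0 : ℕ) : ℚ) with hr'
    have hcast : ((r' : ℚ) : ℝ) = (r:ℝ)⁻¹ - ((a 0 : ℕ) : ℝ) := by
      rw [hr']; push_cast; ring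
    have h0 : 0 ≤ r' := by
      have : (0:ℝ) ≤ ((r':ℚ):ℝ) := by rw [hcast, ← hyval]; exact hy0.le
      exact_mod_cast this
    have h1 : r' < 1 := by
      have : ((r':ℚ):ℝ) < 1 := by rw [hcast, ← hyval]; exact hy1
      exact_mod_cast this
    have hlen : r'.num.natAbs ≤ n := by
      have hd := den_descent r hr0 (a 0 : ℕ) h0 h1
      rw [← hr'] at hd
      omega
    exact ih r' hlen (fun i => a (i+1)) (by rw [hcast, ← hyval])

lemma cfVal_irrational (a : ℕ → ℕ+) : Irrational (cfVal a) := by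
  rintro ⟨r, hr⟩
  exact cfVal_ne_rat r.num.natAbs r le_rfl a hr.symm

def consSeq (c : ℕ+) (b : ℕ → ℕ+) : ℕ → ℕ+
  | 0 => c
  | (i+1) => b i

lemma shift_cons (c : ℕ+) (b : ℕ → ℕ+) (n : ℕ) :
    pnum (consSeq c b) (n+1) = qden b n ∧
    qden (consSeq c b) (n+1) = (c:ℕ) * qden b n + pnum b n :=
  shift (consSeq c b) n

lemma rat_conv : ∀ (n : ℕ) (r : ℚ), r.num.natAbs ≤ n → 0 ≤ r → r ≤ 1 →
    ∃ (m : ℕ) (c : ℕ → ℕ+), ((pnum c m : ℚ) / (qden c m : ℚ)) = r := by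
  intro n
  induction n with
  | zero =>
    intro r hr _ _
    have : r.num = 0 := by omega
    refine ⟨0, fun _ => 1, ?_⟩
    rw [Rat.num_eq_zero.mp this]
    norm_num [pnum, qden]
  | succ n ih =>
    intro r hr hr0 hr1
    rcases eq_or_lt_of_le hr0 with h | hpos
    · refine ⟨0, fun _ => 1, ?_⟩
      rw [← h]; norm_num [pnum, qden]
    · have hinv : (1:ℚ) ≤ r⁻¹ := by
        rw [le_inv_comm₀ one_pos hpos]
        simpa using hr1
      set c0 : ℕ := ⌊r⁻¹⌋₊ with hc0
      have hc0pos : 0 < c0 := by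
        have : (1:ℕ) ≤ c0 := Nat.le_floor (by exact_mod_cast hinv)
        omega
      set r' : ℚ := r⁻¹ - (c0:ℚ) with hr'
      have h0 : 0 ≤ r' := by
        rw [hr', sub_nonneg, hc0]
        exact Nat.floor_le (by positivity)
      have h1 : r' < 1 := by
        rw [hr', sub_lt_iff_lt_add, hc0]
        have := Nat.lt_floor_add_one (r⁻¹)
        push_cast at this ⊢
        linarith
      have hlen : r'.num.natAbs ≤ n := by
        have hd := den_descent r hpos c0 h0 h1
        rw [← hr'] at hd
        omega
      obtain ⟨m, b, hb⟩ := ih r' hlen h0 h1.le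
      refine ⟨m+1, consSeq ⟨c0, hc0pos⟩ b, ?_⟩
      obtain ⟨e1, e2⟩ := shift_cons ⟨c0, hc0pos⟩ b m
      rw [e1, e2]
      have hq : (0:ℚ) < (qden b m : ℚ) := by exact_mod_cast qden_pos b m
      have hp : (pnum b m : ℚ) = r' * qden b m := by
        rw [← hb]; field_simp
      have hinveq : r⁻¹ = (c0:ℚ) + r' := by rw [hr']; ring
      show ((qden b m : ℕ) : ℚ) / (((c0 : ℕ) * qden b m + pnum b m : ℕ) : ℚ) = r
      push_cast
      rw [hp]
      have hden : (0:ℚ) < (c0:ℚ) * qden b m + r' * qden b m := by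
        have : (1:ℚ) ≤ (c0:ℚ) := by exact_mod_cast hc0pos
        nlinarith
      rw [div_eq_iff hden.ne']
      have : (c0:ℚ) * qden b m + r' * qden b m = r⁻¹ * qden b m := by
        rw [hinveq]; ring
      rw [this]
      field_simp

end CFAux

/-- The set `I` of irrational numbers of `[0,1]`. -/
def Iirr : Set ℝ := {x | x ∈ Set.Icc (0:ℝ) 1 ∧ Irrational x}

/-- The (unique) sequence of partial quotients of `x`, when `x` has a continued
fraction expansion. -/
noncomputable def coeff (x : ℝ) : ℕ → ℕ+ := by
  classical
  exact if h : ∃ a : ℕ → ℕ+, cfVal a = x then h.choose else fun _ => 1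

/-- First component of Cantor's bijection: `f₁([a_1,a_2,…]) = [a_1,a_3,a_5,…]`. -/
noncomputable def cantorF1 (x : ℝ) : ℝ := cfVal (fun j => coeff x (2*j))

/-- Second component of Cantor's bijection: `f₂([a_1,a_2,…]) = [a_2,a_4,a_6,…]`. -/
noncomputable def cantorF2 (x : ℝ) : ℝ := cfVal (fun j => coeff x (2*j+1))

namespace CFAux

lemma coeff_cfVal (a : ℕ → ℕ+) : coeff (cfVal a) = a := by
  have h : ∃ b : ℕ → ℕ+, cfVal b = cfVal a := ⟨a, rfl⟩
  rw [coeff, dif_pos h]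
  exact cfVal_inj h.choose_spec

lemma pq_congr (a b : ℕ → ℕ+) : ∀ n, (∀ i, i < n → a i = b i) →
    pnum a n = pnum b n ∧ qden a n = qden b n := by
  intro n
  induction n using Nat.twoStepInduction with
  | zero => intro _; exact ⟨rfl, rfl⟩
  | one =>
    intro h
    have h0 := h 0 (by omega)
    constructor
    · rfl
    · show (a 0 : ℕ) = (b 0 : ℕ); rw [h0]
  | more n ih1 ih2 =>
    intro h
    have e1 := ih1 (fun i hi => h i (by omega))
    have e2 := ih2 (fun i hi => h i (by omega))
    have hn := h (n+1) (by omega)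
    constructor
    · show (a (n+1) : ℕ) * pnum a (n+1) + pnum a n
        = (b (n+1) : ℕ) * pnum b (n+1) + pnum b n
      rw [hn, e1.1, e2.1]
    · show (a (n+1) : ℕ) * qden a (n+1) + qden a n
        = (b (n+1) : ℕ) * qden b (n+1) + qden b n
      rw [hn, e1.2, e2.2]

lemma cfVal_mem_Iirr (a : ℕ → ℕ+) : cfVal a ∈ Iirr :=
  ⟨⟨(cfVal_pos a).le, (cfVal_le_one a)⟩, cfVal_irrational a⟩

end CFAux

open CFAux

/-- Any extension to `[0,1]` of Cantor's bijection `f = (f₁,f₂) : I → I²` is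
discontinuous at every rational number of `[0,1]`. -/
theorem extension_of_cantor_discontinuous_at_rationals
    (g : ℝ → ℝ × ℝ)
    (hmap : ∀ x ∈ Set.Icc (0:ℝ) 1, g x ∈ Set.Icc (0:ℝ) 1 ×ˢ Set.Icc (0:ℝ) 1)
    (hg : ∀ x ∈ Iirr, g x = (cantorF1 x, cantorF2 x)) :
    ∀ q ∈ Set.Icc (0:ℝ) 1, ¬ Irrational q →
      ¬ ContinuousWithinAt g (Set.Icc (0:ℝ) 1) q := by

  intro q hq hirr hcont
  obtain ⟨r, hr⟩ := not_not.mp hirr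
  have hr0 : 0 ≤ r := by
    have : (0:ℝ) ≤ (r:ℝ) := hr ▸ hq.1
    exact_mod_cast this
  have hr1 : r ≤ 1 := by
    have : (r:ℝ) ≤ 1 := hr ▸ hq.2
    exact_mod_cast this
  obtain ⟨m, c, hc⟩ := rat_conv r.num.natAbs r le_rfl hr0 hr1
  -- the perturbed coefficient sequences
  set A : ℕ+ → ℕ+ → ℕ → ℕ+ :=
    fun d k n => if n < m then c n else if n = m then k else d with hA
  have hpre : ∀ d k : ℕ+, pnum (A d k) m = pnum c m ∧ qden (A d k) m = qden c m :=
    fun d k => pq_congr (A d k) c m (fun i hi => by simp [hA, hi])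
  have hAm : ∀ d k : ℕ+, A d k m = k := fun d k => by simp [hA]
  -- convergence of the sequences to q
  have hsq : ∀ d k : ℕ+, s (A d k) m = q := by
    intro d k
    rw [s, (hpre d k).1, (hpre d k).2, ← hr, ← hc]
    push_cast
    ring
  have hdist : ∀ d k : ℕ+, dist (cfVal (A d k)) q ≤ 2 / ((k : ℕ) : ℝ) := by
    intro d k
    have h1 := dist_cfVal (A d k) m
    rw [hsq d k, dist_comm] at h1
    refine h1.trans ?_
    have hk : ((k:ℕ):ℝ) ≤ (qden (A d k) m : ℝ) * qden (A d k) (m+1) := by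
      have h2 : (k:ℕ) ≤ qden (A d k) (m+1) := by
        have h := coeff_le_qden (A d k) m
        rwa [hAm d k] at h
      have h3 : 1 ≤ qden (A d k) m := qden_pos _ m
      have : (k:ℕ) ≤ qden (A d k) m * qden (A d k) (m+1) := by
        calc (k:ℕ) ≤ qden (A d k) (m+1) := h2
        _ = 1 * qden (A d k) (m+1) := (one_mul _).symm
        _ ≤ qden (A d k) m * qden (A d k) (m+1) := Nat.mul_le_mul_right _ h3
      exact_mod_cast this
    have hkpos : (0:ℝ) < ((k:ℕ):ℝ) := by exact_mod_cast k.pos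
    gcongr
  set K : ℕ → ℕ+ := fun j => ⟨j+1, Nat.succ_pos j⟩ with hK
  have htq : ∀ d : ℕ+, Tendsto (fun j : ℕ => cfVal (A d (K j))) atTop (nhds q) := by
    intro d
    rw [tendsto_iff_dist_tendsto_zero]
    apply squeeze_zero (fun j => dist_nonneg) (fun j => hdist d (K j))
    have h2 := (tendsto_const_div_atTop_nhds_zero_nat (2:ℝ)).comp (tendsto_add_atTop_nat 1)
    have he : (fun j : ℕ => 2 / (((K j : ℕ)) : ℝ))
        = (fun n : ℕ => 2 / (n : ℝ)) ∘ (fun j => j + 1) := by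
      funext j; simp [hK]
    rw [he]
    exact_mod_cast h2
  have hmem : ∀ (d : ℕ+) (j : ℕ), cfVal (A d (K j)) ∈ Iirr := fun d j => cfVal_mem_Iirr _
  have htq' : ∀ d : ℕ+, Tendsto (fun j : ℕ => cfVal (A d (K j))) atTop
      (nhdsWithin q (Set.Icc (0:ℝ) 1)) := by
    intro d
    rw [tendsto_nhdsWithin_iff]
    exact ⟨htq d, Eventually.of_forall (fun j => (hmem d j).1)⟩
  have hglim : ∀ d : ℕ+, Tendsto (fun j : ℕ => g (cfVal (A d (K j)))) atTop (nhds (g q)) :=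
    fun d => Filter.Tendsto.comp hcont (htq' d)
  -- the constant component
  rcases Nat.even_or_odd m with hm | hm
  · -- m even : odd 0-indexed positions avoid m, use second component
    set W : ℕ+ → ℕ → ℕ+ := fun d j => if 2*j+1 < m then c (2*j+1) else d with hW
    have hcomp : ∀ (d : ℕ+) (j : ℕ), cantorF2 (cfVal (A d (K j))) = cfVal (W d) := by
      intro d j
      rw [cantorF2, coeff_cfVal]
      congr 1
      funext i
      by_cases hi : 2*i+1 < m
      · simp [hA, hW, hi]
      · have hne : ¬ (2*i+1 = m) := by
          intro hcontra
          exact (Nat.not_even_iff_odd.mpr ⟨i, by omega⟩) (hcontra ▸ hm)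
        simp [hA, hW, hi, hne]
    have hconst : ∀ d : ℕ+, cfVal (W d) = (g q).2 := by
      intro d
      have h1 : Tendsto (fun j : ℕ => (g (cfVal (A d (K j)))).2) atTop (nhds (g q).2) :=
        (continuous_snd.tendsto (g q)).comp (hglim d)
      have h2 : (fun j : ℕ => (g (cfVal (A d (K j)))).2) = fun _ => cfVal (W d) := by
        funext j
        rw [hg _ (hmem d j)]
        exact hcomp d j
      rw [h2] at h1
      exact tendsto_nhds_unique tendsto_const_nhds h1
    have hW13 : W 1 = W 3 := cfVal_inj ((hconst 1).trans (hconst 3).symm)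
    have h13 : (1 : ℕ+) = 3 := by
      have hval := congrFun hW13 m
      rw [hW] at hval
      simp only [show ¬ (2*m+1 < m) by omega, if_neg, if_false] at hval
      simpa using hval
    exact absurd h13 (by decide)
  · -- m odd : even 0-indexed positions avoid m, use first component
    set W : ℕ+ → ℕ → ℕ+ := fun d j => if 2*j < m then c (2*j) else d with hW
    have hcomp : ∀ (d : ℕ+) (j : ℕ), cantorF1 (cfVal (A d (K j))) = cfVal (W d) := by
      intro d j
      rw [cantorF1, coeff_cfVal]
      congr 1
      funext i
      by_cases hi : 2*i < m
      · simp [hA, hW, hi]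
      · have hne : ¬ (2*i = m) := by
          intro hcontra
          exact (Nat.not_odd_iff_even.mpr ⟨i, by omega⟩) (hcontra ▸ hm)
        simp [hA, hW, hi, hne]
    have hconst : ∀ d : ℕ+, cfVal (W d) = (g q).1 := by
      intro d
      have h1 : Tendsto (fun j : ℕ => (g (cfVal (A d (K j)))).1) atTop (nhds (g q).1) :=
        (continuous_fst.tendsto (g q)).comp (hglim d)
      have h2 : (fun j : ℕ => (g (cfVal (A d (K j)))).1) = fun _ => cfVal (W d) := by
        funext j
        rw [hg _ (hmem d j)]
        exact hcomp d j
      rw [h2] at h1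
      exact tendsto_nhds_unique tendsto_const_nhds h1
    have hW13 : W 1 = W 3 := cfVal_inj ((hconst 1).trans (hconst 3).symm)
    have h13 : (1 : ℕ+) = 3 := by
      have hval := congrFun hW13 m
      rw [hW] at hval
      simp only [show ¬ (2*m < m) by omega, if_neg, if_false] at hval
      simpa using hval
    exact absurd h13 (by decide)
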